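/- All-minors contributor expansion: for an oriented hypergraph G and subsets U, W ⊆ V with |U| = |W|, the permanent of the minor [L_G]_{(U;W)} obtained by deleting rows U and columns W from the Laplacian equals ∑_{c ∈ C(U;W;G)} (−1)^{on(c)+nn(c)}, where C(U;W;G) is the set of sub-contributors c: ⨿_{u ∈ V∖U} P_1 → G with c(t_u)=u and {c(h_u)} = V∖W, and on(c), nn(c) count the odd and negative non-adjacency-trivial components (paths or circles) in the image of c. -/

import Mathlib

open scoped Classical

/-- An oriented hypergraph on vertex set `V`: edges `E`, incidences `I`,
incidence function given by `vtx` and `edge`, and incidence orientations `sgn`. -/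
structure OrientedHypergraph (V : Type) [Fintype V] [DecidableEq V] where
  E : Type
  I : Type
  [fintypeE : Fintype E]
  [fintypeI : Fintype I]
  [decEqI : DecidableEq I]
  vtx : I → V
  edge : I → E
  sgn : I → ℤ

attribute [instance] OrientedHypergraph.fintypeE OrientedHypergraph.fintypeI
  OrientedHypergraph.decEqI

variable {V : Type} [Fintype V] [DecidableEq V]

/-- A bidirected graph: an oriented hypergraph in which every edge has exactly two
incidences, recorded by the fixed-point-free involution `τ` pairing the two
incidences of each edge. -/
structure Bidirected (V : Type) [Fintype V] [DecidableEq V]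
    extends OrientedHypergraph V where
  τ : I → I
  τ_invol : ∀ i, τ (τ i) = i
  τ_ne : ∀ i, τ i ≠ i
  τ_edge : ∀ i, edge (τ i) = edge i
  edge_two : ∀ i j, edge i = edge j → j = i ∨ j = τ i

/-- A pre-contributor: an incidence-preserving map of `|V|` disjoint directed paths
of length one into `G`, sending the tail `t_v` to `v`.  The component at `v` is the
weak walk with tail incidence `i1 v` and head incidence `i2 v`. -/
structure PreContributor (G : OrientedHypergraph V) where
  i1 : V → G.I
  i2 : V → G.I
  tail_eq : ∀ v, G.vtx (i1 v) = v
  edge_eq : ∀ v, G.edge (i1 v) = G.edge (i2 v)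

namespace PreContributor

variable {G : OrientedHypergraph V}

/-- The head vertex of the component of `p` at `v`: `p(h_v)`. -/
def head (p : PreContributor G) (v : V) : V := G.vtx (p.i2 v)

/-- A contributor: a pre-contributor whose heads cover `V`, `{p(h_v) | v ∈ V} = V`. -/
def IsContributor (p : PreContributor G) : Prop := Function.Surjective p.head

/-- The component of `p` at `v` is a backstep `(v,i,e,i,v)`. -/
def BackstepAt (p : PreContributor G) (v : V) : Prop := p.i2 v = p.i1 v

/-- The sign of the length-one weak walk of `p` at `v`. -/
def walkSign (p : PreContributor G) (v : V) : ℤ := -(G.sgn (p.i1 v) * G.sgn (p.i2 v))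

/-- Two vertices lie in the same component of the image of `p`. -/
def compRel (p : PreContributor G) : V → V → Prop :=
  Relation.EqvGen (fun v w => p.head v = w)

/-- The setoid of components of `p`. -/
def compSetoid (p : PreContributor G) : Setoid V := Relation.EqvGen.setoid (fun v w => p.head v = w)

/-- A component class is a (lone) backstep. -/
def IsBackstepClass (p : PreContributor G) (q : Quotient p.compSetoid) : Prop :=
  ∃ v, Quotient.mk p.compSetoid v = q ∧ p.head v = v ∧ p.BackstepAt v

/-- The number of vertices in a component class. -/
noncomputable def compCard (p : PreContributor G) (q : Quotient p.compSetoid) : ℕ :=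
  Nat.card {v : V // Quotient.mk p.compSetoid v = q}

/-- The sign of a component class: the product of the signs of its weak walks. -/
noncomputable def compSign (p : PreContributor G) (q : Quotient p.compSetoid) : ℤ :=
  ∏ᶠ v ∈ {v : V | Quotient.mk p.compSetoid v = q}, p.walkSign v

/-- `tc`: total number of circles of a contributor (backsteps do not count). -/
noncomputable def tc (p : PreContributor G) : ℕ :=
  Nat.card {q : Quotient p.compSetoid // ¬ p.IsBackstepClass q}

/-- `pc`: number of positive circles of a contributor. -/
noncomputable def pc (p : PreContributor G) : ℕ :=
  Nat.card {q : Quotient p.compSetoid // ¬ p.IsBackstepClass q ∧ p.compSign q = 1}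

/-- `nc`: number of negative circles of a contributor. -/
noncomputable def nc (p : PreContributor G) : ℕ :=
  Nat.card {q : Quotient p.compSetoid // ¬ p.IsBackstepClass q ∧ p.compSign q = -1}

/-- `oc`: number of odd circles of a contributor. -/
noncomputable def oc (p : PreContributor G) : ℕ :=
  Nat.card {q : Quotient p.compSetoid // ¬ p.IsBackstepClass q ∧ Odd (p.compCard q)}

/-- `ec`: number of even circles of a contributor. -/
noncomputable def ec (p : PreContributor G) : ℕ :=
  Nat.card {q : Quotient p.compSetoid // ¬ p.IsBackstepClass q ∧ Even (p.compCard q)}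

end PreContributor

/-- The `V × E` incidence matrix of an oriented hypergraph. -/
noncomputable def OrientedHypergraph.inc (G : OrientedHypergraph V) : Matrix V G.E ℤ :=
  fun v e => ∑ᶠ i ∈ {i : G.I | G.vtx i = v ∧ G.edge i = e}, G.sgn i

/-- The oriented hypergraphic Laplacian `L_G = H_G H_Gᵀ`. -/
noncomputable def OrientedHypergraph.lap (G : OrientedHypergraph V) : Matrix V V ℤ :=
  G.inc * G.inc.transpose

namespace Bidirected

variable {G : Bidirected V}

/-- Packing the directed adjacency of `p` at `v` into a backstep. -/
def pack (G : Bidirected V) (p : PreContributor G.toOrientedHypergraph) (v : V) :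
    PreContributor G.toOrientedHypergraph where
  i1 := p.i1
  i2 := fun u => if u = v then p.i1 v else p.i2 u
  tail_eq := p.tail_eq
  edge_eq := fun u => by by_cases h : u = v <;> simp [h, p.edge_eq u]

/-- Unpacking the backstep of `p` at `v` into the unique directed adjacency out of
`v` completing the edge. -/
def unpack (G : Bidirected V) (p : PreContributor G.toOrientedHypergraph) (v : V) :
    PreContributor G.toOrientedHypergraph where
  i1 := p.i1
  i2 := fun u => if u = v then G.τ (p.i1 v) else p.i2 u
  tail_eq := p.tail_eq
  edge_eq := fun u => by
    by_cases h : u = v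
    · simp [h, G.τ_edge]
    · simp [h, p.edge_eq u]

end Bidirected

/-- A sub-pre-contributor over `V ∖ U`: one directed path of length one out of each
vertex of `V ∖ U`, mapped into `G` preserving incidences. -/
structure SubPC {V : Type} [Fintype V] [DecidableEq V]
    (G : OrientedHypergraph V) (U : Set V) where
  i1 : {v : V // v ∉ U} → G.I
  i2 : {v : V // v ∉ U} → G.I
  tail_eq : ∀ v, G.vtx (i1 v) = v.val
  edge_eq : ∀ v, G.edge (i1 v) = G.edge (i2 v)

namespace SubPC

variable {V : Type} [Fintype V] [DecidableEq V] {G : OrientedHypergraph V} {U : Set V}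

/-- The head vertex of the component of `c` at `v`. -/
def head (c : SubPC G U) (v : {v : V // v ∉ U}) : V := G.vtx (c.i2 v)

/-- A sub-contributor in `C(U;W;G)`: tails at `V∖U`, heads landing bijectively
on `V∖W`. -/
def IsSubContributor (c : SubPC G U) (W : Set V) : Prop :=
  Function.Injective c.head ∧ Set.range c.head = {v : V | v ∉ W}

/-- The sign of the length-one weak walk of `c` at `v`. -/
def walkSign (c : SubPC G U) (v : {v : V // v ∉ U}) : ℤ :=
  -(G.sgn (c.i1 v) * G.sgn (c.i2 v))

/-- Two vertices of `V` lie in the same component of the image of `c`. -/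
def compRel (c : SubPC G U) : V → V → Prop :=
  Relation.EqvGen (fun v w => ∃ h : v ∉ U, c.head ⟨v, h⟩ = w)

/-- The setoid of components of the image of `c` on `V`. -/
def compSetoid (c : SubPC G U) : Setoid V :=
  Relation.EqvGen.setoid (fun v w => ∃ h : v ∉ U, c.head ⟨v, h⟩ = w)

/-- A component class is adjacency-trivial, i.e. a lone backstep. -/
def IsTrivialClass (c : SubPC G U) (q : Quotient c.compSetoid) : Prop :=
  ∃ v : {v : V // v ∉ U}, Quotient.mk c.compSetoid v.val = q ∧
    c.head v = v.val ∧ c.i2 v = c.i1 v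

/-- The number of weak walks (arcs) of `c` in a component class. -/
noncomputable def arcCard (c : SubPC G U) (q : Quotient c.compSetoid) : ℕ :=
  Nat.card {v : {v : V // v ∉ U} // Quotient.mk c.compSetoid v.val = q}

/-- The sign of a component class: the product of the signs of its weak walks. -/
noncomputable def compSign (c : SubPC G U) (q : Quotient c.compSetoid) : ℤ :=
  ∏ᶠ v ∈ {v : {v : V // v ∉ U} | Quotient.mk c.compSetoid v.val = q}, c.walkSign v

/-- `on`: the number of odd non-adjacency-trivial components of `c`. -/
noncomputable def onn (c : SubPC G U) : ℕ :=
  Nat.card {q : Quotient c.compSetoid // ¬ c.IsTrivialClass q ∧ Odd (c.arcCard q)}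

/-- `nn`: the number of negative non-adjacency-trivial components of `c`. -/
noncomputable def nn (c : SubPC G U) : ℕ :=
  Nat.card {q : Quotient c.compSetoid // ¬ c.IsTrivialClass q ∧ c.compSign q = -1}

end SubPC

/-- The permanent of a (square-shaped) rectangular matrix: the sum over all
bijections between the index types of the corresponding diagonal products. -/
noncomputable def rectPermanent {α β : Type*} (M : Matrix α β ℤ) : ℤ :=
  ∑ᶠ f : α ≃ β, ∏ᶠ a : α, M a (f a)


section AuxAllMinors

variable {V : Type} [Fintype V] [DecidableEq V]

noncomputable instance (G : OrientedHypergraph V) (U : Set V) : Fintype (SubPC G U) :=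
  Fintype.ofInjective (fun c : SubPC G U => (c.i1, c.i2)) (by
    rintro ⟨a1, a2, _, _⟩ ⟨b1, b2, _, _⟩ h
    simp only [Prod.mk.injEq] at h
    obtain ⟨h1, h2⟩ := h
    subst h1; subst h2; rfl)

/-- The summand indexed by a pair of incidences in the expansion of a Laplacian entry. -/
noncomputable def indTerm (G : OrientedHypergraph V) (v w : V) (p : G.I × G.I) : ℤ :=
  if G.vtx p.1 = v ∧ G.vtx p.2 = w ∧ G.edge p.1 = G.edge p.2 then G.sgn p.1 * G.sgn p.2 else 0

lemma inc_eq (G : OrientedHypergraph V) (v : V) (e : G.E) :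
    G.inc v e = ∑ i ∈ Finset.univ.filter (fun i => G.vtx i = v ∧ G.edge i = e), G.sgn i := by
  rw [OrientedHypergraph.inc, ← finsum_mem_coe_finset]
  congr 1
  ext i; simp

lemma lap_entry (G : OrientedHypergraph V) (v w : V) :
    G.lap v w = ∑ p : G.I × G.I, indTerm G v w p := by
  rw [OrientedHypergraph.lap, Matrix.mul_apply]
  have hinner : ∀ i j : G.I,
      (∑ e : G.E, (if G.vtx i = v ∧ G.edge i = e then G.sgn i else 0) *
        (if G.vtx j = w ∧ G.edge j = e then G.sgn j else 0)) = indTerm G v w (i, j) := by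
    intro i j
    have he : ∀ e : G.E,
        (if G.vtx i = v ∧ G.edge i = e then G.sgn i else 0) *
          (if G.vtx j = w ∧ G.edge j = e then G.sgn j else 0) =
        if G.edge i = e then indTerm G v w (i, j) else 0 := by
      intro e
      by_cases h3 : G.edge i = e
      · subst h3
        by_cases h1 : G.vtx i = v <;> by_cases h2 : G.vtx j = w <;>
          by_cases h4 : G.edge i = G.edge j <;>
          simp [indTerm, h1, h2, h4, eq_comm]
      · by_cases h4 : G.edge j = e <;> simp [indTerm, h3, h4]
    rw [Finset.sum_congr rfl fun e _ => he e, Finset.sum_ite_eq]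
    simp
  calc (∑ e : G.E, G.inc v e * G.inc.transpose e w)
      = ∑ e : G.E, ∑ i ∈ Finset.univ.filter (fun i => G.vtx i = v ∧ G.edge i = e),
          ∑ j ∈ Finset.univ.filter (fun j => G.vtx j = w ∧ G.edge j = e),
            G.sgn i * G.sgn j := by
        refine Finset.sum_congr rfl fun e _ => ?_
        rw [Matrix.transpose_apply, inc_eq, inc_eq, Finset.sum_mul_sum]
    _ = ∑ e : G.E, ∑ i : G.I, ∑ j : G.I,
          (if G.vtx i = v ∧ G.edge i = e then G.sgn i else 0) *
            (if G.vtx j = w ∧ G.edge j = e then G.sgn j else 0) := by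
        refine Finset.sum_congr rfl fun e _ => ?_
        rw [Finset.sum_filter]
        refine Finset.sum_congr rfl fun i _ => ?_
        rw [Finset.sum_filter]
        by_cases h : G.vtx i = v ∧ G.edge i = e <;>
          simp [h, Finset.mul_sum]
    _ = ∑ i : G.I, ∑ j : G.I, ∑ e : G.E,
          (if G.vtx i = v ∧ G.edge i = e then G.sgn i else 0) *
            (if G.vtx j = w ∧ G.edge j = e then G.sgn j else 0) := by
        rw [Finset.sum_comm]
        exact Finset.sum_congr rfl fun i _ => Finset.sum_comm
    _ = ∑ i : G.I, ∑ j : G.I, indTerm G v w (i, j) :=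
        Finset.sum_congr rfl fun i _ => Finset.sum_congr rfl fun j _ => hinner i j
    _ = ∑ p : G.I × G.I, indTerm G v w p := by rw [← Fintype.sum_prod_type]

/-- Build a sub-pre-contributor from admissible data. -/
def mkSub (G : OrientedHypergraph V) (U : Set V) (g : {v : V // v ∉ U} → G.I × G.I)
    (h1 : ∀ v, G.vtx (g v).1 = v.val) (h2 : ∀ v, G.edge (g v).1 = G.edge (g v).2) :
    SubPC G U :=
  { i1 := fun v => (g v).1, i2 := fun v => (g v).2, tail_eq := h1, edge_eq := h2 }

/-- The head bijection of a sub-contributor. -/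
noncomputable def headEquivOf {G : OrientedHypergraph V} {U W : Set V} (c : SubPC G U)
    (hc : c.IsSubContributor W) : {v : V // v ∉ U} ≃ {w : V // w ∉ W} :=
  Equiv.ofBijective (fun v => ⟨c.head v, by
      have : c.head v ∈ Set.range c.head := ⟨v, rfl⟩
      rw [hc.2] at this; exact this⟩)
    (by
      constructor
      · intro a b hab
        exact hc.1 (congrArg Subtype.val hab)
      · rintro ⟨w, hw⟩
        have : w ∈ Set.range c.head := by rw [hc.2]; exact hw
        obtain ⟨v, hv⟩ := this
        exact ⟨v, Subtype.ext hv⟩)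

lemma sign_lemma (G : OrientedHypergraph V) (hsgn : ∀ i, G.sgn i = 1 ∨ G.sgn i = -1)
    (U W : Set V) (c : SubPC G U) (hc : c.IsSubContributor W) :
    (∏ v : {v : V // v ∉ U}, G.sgn (c.i1 v) * G.sgn (c.i2 v)) =
      (-1 : ℤ) ^ (SubPC.onn c + SubPC.nn c) := by
  classical
  set Q := Quotient c.compSetoid with hQ
  set mk : {v : V // v ∉ U} → Q := fun v => Quotient.mk c.compSetoid v.val with hmkdef
  -- walk signs are units
  have hws : ∀ v, c.walkSign v = 1 ∨ c.walkSign v = -1 := by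
    intro v
    rcases hsgn (c.i1 v) with h1 | h1 <;> rcases hsgn (c.i2 v) with h2 | h2 <;>
      simp [SubPC.walkSign, h1, h2]
  -- arc cardinality as a filter cardinality
  have harc : ∀ q : Q, c.arcCard q = (Finset.univ.filter (fun v => mk v = q)).card := by
    intro q
    rw [SubPC.arcCard, Nat.card_eq_fintype_card, Fintype.card_subtype]
  -- component sign as a finset product
  have hcs : ∀ q : Q, c.compSign q = ∏ v ∈ Finset.univ.filter (fun v => mk v = q),
      c.walkSign v := by
    intro q
    rw [SubPC.compSign, ← finprod_mem_coe_finset]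
    congr 1
    ext v; simp [hmkdef]
  have hcsu : ∀ q : Q, c.compSign q = 1 ∨ c.compSign q = -1 := by
    intro q
    rw [← Int.isUnit_iff, hcs]
    refine Finset.prod_induction _ IsUnit (fun a b => IsUnit.mul) isUnit_one fun v _ => ?_
    rcases hws v with h | h <;> rw [h] <;> simp
  -- per-class contribution
  have hclass : ∀ q : Q, (∏ v ∈ Finset.univ.filter (fun v => mk v = q), -(c.walkSign v))
      = (-1 : ℤ) ^ c.arcCard q * c.compSign q := by
    intro q
    rw [harc, hcs]
    calc (∏ v ∈ Finset.univ.filter (fun v => mk v = q), -(c.walkSign v))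
        = ∏ v ∈ Finset.univ.filter (fun v => mk v = q), (-1 : ℤ) * c.walkSign v :=
          Finset.prod_congr rfl fun v _ => (neg_one_mul _).symm
      _ = _ := by rw [Finset.prod_mul_distrib, Finset.prod_const]
  -- trivial classes contribute 1
  have htriv : ∀ q : Q, c.IsTrivialClass q → (-1 : ℤ) ^ c.arcCard q * c.compSign q = 1 := by
    rintro q ⟨v0, hq, hh, hb⟩
    have key : ∀ a b : V,
        Relation.EqvGen (fun x y => ∃ h : x ∉ U, c.head ⟨x, h⟩ = y) a b →
        (a = v0.val → b = v0.val) ∧ (b = v0.val → a = v0.val) := by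
      intro a b h
      induction h with
      | rel a b hab =>
        obtain ⟨ha, hab⟩ := hab
        constructor
        · intro h
          rw [show (⟨a, ha⟩ : {v : V // v ∉ U}) = v0 from Subtype.ext h] at hab
          rw [← hab]; exact hh
        · intro h
          subst h
          have : (⟨a, ha⟩ : {v : V // v ∉ U}) = v0 := hc.1 (hab.trans hh.symm)
          exact congrArg Subtype.val this
      | refl a => exact ⟨id, id⟩
      | symm a b _ ih => exact ⟨ih.2, ih.1⟩
      | trans a b d _ _ ih1 ih2 =>
        exact ⟨fun h => ih2.1 (ih1.1 h), fun h => ih1.2 (ih2.2 h)⟩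
    have hfib : Finset.univ.filter (fun v => mk v = q) = {v0} := by
      ext v
      simp only [Finset.mem_filter, Finset.mem_univ, true_and, Finset.mem_singleton]
      constructor
      · intro hv
        have heq : Quotient.mk c.compSetoid v.val = Quotient.mk c.compSetoid v0.val := by
          rw [← hq] at hv; exact hv
        have hrel : Relation.EqvGen (fun x y => ∃ h : x ∉ U, c.head ⟨x, h⟩ = y)
            v.val v0.val := Quotient.eq.mp heq
        exact Subtype.ext ((key _ _ hrel).2 rfl)
      · rintro rfl
        rw [hmkdef]; exact hq
    have hws0 : c.walkSign v0 = -1 := by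
      rcases hsgn (c.i1 v0) with h | h <;> simp [SubPC.walkSign, hb, h]
    rw [harc, hcs, hfib]
    simp [hws0]
  -- nontrivial classes
  have hnont : ∀ q : Q, ¬ c.IsTrivialClass q →
      (-1 : ℤ) ^ c.arcCard q * c.compSign q =
        (-1 : ℤ) ^ ((if Odd (c.arcCard q) then 1 else 0) +
          (if c.compSign q = -1 then 1 else 0)) := by
    intro q hq
    rcases Nat.even_or_odd (c.arcCard q) with he | ho
    · rcases hcsu q with h1 | h1 <;>
        rw [h1, Even.neg_one_pow he] <;> simp [Nat.not_odd_iff_even.mpr he, h1]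
    · rcases hcsu q with h1 | h1 <;>
        rw [h1, Odd.neg_one_pow ho] <;> simp [ho, h1]
  -- counting lemmas
  have honn : SubPC.onn c = (Finset.univ.filter
      (fun q : Q => ¬ c.IsTrivialClass q ∧ Odd (c.arcCard q))).card := by
    rw [SubPC.onn, Nat.card_eq_fintype_card, Fintype.card_subtype]
  have hnn : SubPC.nn c = (Finset.univ.filter
      (fun q : Q => ¬ c.IsTrivialClass q ∧ c.compSign q = -1)).card := by
    rw [SubPC.nn, Nat.card_eq_fintype_card, Fintype.card_subtype]
  -- assemble
  calc (∏ v : {v : V // v ∉ U}, G.sgn (c.i1 v) * G.sgn (c.i2 v))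
      = ∏ v : {v : V // v ∉ U}, -(c.walkSign v) :=
        Finset.prod_congr rfl fun v _ => by simp [SubPC.walkSign]
    _ = ∏ q : Q, ∏ v ∈ Finset.univ.filter (fun v => mk v = q), -(c.walkSign v) :=
        (Finset.prod_fiberwise Finset.univ mk _).symm
    _ = ∏ q : Q, (-1 : ℤ) ^ c.arcCard q * c.compSign q :=
        Finset.prod_congr rfl fun q _ => hclass q
    _ = ∏ q ∈ Finset.univ.filter (fun q : Q => ¬ c.IsTrivialClass q),
          (-1 : ℤ) ^ c.arcCard q * c.compSign q := by
        refine (Finset.prod_subset (Finset.filter_subset _ _) fun q _ hq => ?_).symm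
        simp only [Finset.mem_filter, Finset.mem_univ, true_and, not_not] at hq
        exact htriv q hq
    _ = ∏ q ∈ Finset.univ.filter (fun q : Q => ¬ c.IsTrivialClass q),
          (-1 : ℤ) ^ ((if Odd (c.arcCard q) then 1 else 0) +
            (if c.compSign q = -1 then 1 else 0)) := by
        refine Finset.prod_congr rfl fun q hq => ?_
        simp only [Finset.mem_filter, Finset.mem_univ, true_and] at hq
        exact hnont q hq
    _ = (-1 : ℤ) ^ ∑ q ∈ Finset.univ.filter (fun q : Q => ¬ c.IsTrivialClass q),
          ((if Odd (c.arcCard q) then 1 else 0) +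
            (if c.compSign q = -1 then 1 else 0)) :=
        Finset.prod_pow_eq_pow_sum _ _ _
    _ = (-1 : ℤ) ^ (SubPC.onn c + SubPC.nn c) := by
        congr 1
        rw [Finset.sum_add_distrib, Finset.sum_boole, Finset.sum_boole,
          Finset.filter_filter, Finset.filter_filter, honn, hnn]
        simp

end AuxAllMinors

/-- All-minors contributor expansion: for an oriented hypergraph `G`
and subsets `U, W ⊆ V` with `|U| = |W|`, the permanent of the minor
`[L_G]_{(U;W)}` (delete rows `U` and columns `W` of the Laplacian) equals
`∑_{c ∈ C(U;W;G)} (−1)^{on(c)+nn(c)}`, where `C(U;W;G)` is the set of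
sub-contributors out of `V∖U` whose heads land bijectively on `V∖W`, and `on`,
`nn` count the odd and negative non-adjacency-trivial components (paths or
circles). -/
theorem all_minors_permanent {V : Type} [Fintype V] [DecidableEq V]
    (G : OrientedHypergraph V) (hsgn : ∀ i, G.sgn i = 1 ∨ G.sgn i = -1)
    (U W : Set V) (hUW : Nat.card U = Nat.card W) :
    rectPermanent (fun (v : {v : V // v ∉ U}) (w : {w : V // w ∉ W}) =>
        G.lap v.val w.val) =
      ∑ᶠ c ∈ {c : SubPC G U | c.IsSubContributor W},
        (-1 : ℤ) ^ (SubPC.onn c + SubPC.nn c) := by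
  classical
  set Sfin : Finset (SubPC G U) := {c : SubPC G U | c.IsSubContributor W}.toFinset with hSfin
  have hmem : ∀ c, c ∈ Sfin ↔ c.IsSubContributor W := by
    intro c; rw [hSfin, Set.mem_toFinset]; rfl
  -- Step 1: expand permanent and Laplacian entries
  have step1 : rectPermanent (fun (v : {v : V // v ∉ U}) (w : {w : V // w ∉ W}) =>
      G.lap v.val w.val) =
      ∑ x : ({v : V // v ∉ U} ≃ {w : V // w ∉ W}) × ({v : V // v ∉ U} → G.I × G.I),
        ∏ v, indTerm G v.val ((x.1 v).val) (x.2 v) := by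
    unfold rectPermanent
    rw [finsum_eq_sum_of_fintype, Fintype.sum_prod_type]
    refine Finset.sum_congr rfl fun f _ => ?_
    rw [finprod_eq_prod_of_fintype]
    calc (∏ v : {v : V // v ∉ U}, G.lap v.val ((f v).val))
        = ∏ v : {v : V // v ∉ U}, ∑ p ∈ (Finset.univ : Finset (G.I × G.I)),
            indTerm G v.val ((f v).val) p :=
          Finset.prod_congr rfl fun v _ => lap_entry G v.val ((f v).val)
      _ = ∑ g ∈ Fintype.piFinset (fun _ : {v : V // v ∉ U} => (Finset.univ : Finset (G.I × G.I))),
            ∏ v, indTerm G v.val ((f v).val) (g v) := Finset.prod_univ_sum _ _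
      _ = _ := by rw [Fintype.piFinset_univ]
  -- the admissibility predicate
  have step2 : (∑ x : ({v : V // v ∉ U} ≃ {w : V // w ∉ W}) × ({v : V // v ∉ U} → G.I × G.I),
        ∏ v, indTerm G v.val ((x.1 v).val) (x.2 v)) =
      ∑ x ∈ Finset.univ.filter (fun x : ({v : V // v ∉ U} ≃ {w : V // w ∉ W}) ×
          ({v : V // v ∉ U} → G.I × G.I) =>
          ∀ v, G.vtx (x.2 v).1 = v.val ∧ G.vtx (x.2 v).2 = (x.1 v).val ∧
            G.edge (x.2 v).1 = G.edge (x.2 v).2),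
        ∏ v, indTerm G v.val ((x.1 v).val) (x.2 v) := by
    refine (Finset.sum_filter_of_ne fun x _ hx => ?_).symm
    by_contra hP
    push_neg at hP
    obtain ⟨v, hv⟩ := hP
    refine hx (Finset.prod_eq_zero (Finset.mem_univ v) ?_)
    rw [indTerm, if_neg]
    tauto
  have step3 : (∑ x ∈ Finset.univ.filter (fun x : ({v : V // v ∉ U} ≃ {w : V // w ∉ W}) ×
          ({v : V // v ∉ U} → G.I × G.I) =>
          ∀ v, G.vtx (x.2 v).1 = v.val ∧ G.vtx (x.2 v).2 = (x.1 v).val ∧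
            G.edge (x.2 v).1 = G.edge (x.2 v).2),
        ∏ v, indTerm G v.val ((x.1 v).val) (x.2 v)) =
      ∑ c ∈ Sfin, ∏ v : {v : V // v ∉ U}, G.sgn (c.i1 v) * G.sgn (c.i2 v) := by
    refine Finset.sum_bij'
      (fun x hx => mkSub G U x.2 (fun v => ((Finset.mem_filter.mp hx).2 v).1)
        (fun v => ((Finset.mem_filter.mp hx).2 v).2.2))
      (fun c hcc => (headEquivOf c ((hmem c).mp hcc), fun v => (c.i1 v, c.i2 v)))
      ?_ ?_ ?_ ?_ ?_
    · -- maps into Sfin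
      intro x hx
      obtain ⟨-, hP⟩ := Finset.mem_filter.mp hx
      rw [hmem]
      have hhead : ∀ v, SubPC.head (mkSub G U x.2 (fun v => (hP v).1)
          (fun v => (hP v).2.2)) v = (x.1 v).val := fun v => (hP v).2.1
      constructor
      · intro a b hab
        apply x.1.injective
        apply Subtype.ext
        rw [← hhead a, ← hhead b]
        exact hab
      · ext w
        simp only [Set.mem_range, Set.mem_setOf_eq]
        constructor
        · rintro ⟨v, hv⟩
          rw [hhead v] at hv
          rw [← hv]
          exact (x.1 v).property
        · intro hw
          refine ⟨x.1.symm ⟨w, hw⟩, ?_⟩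
          rw [hhead]
          simp
    · -- maps into filter
      intro c hcc
      refine Finset.mem_filter.mpr ⟨Finset.mem_univ _, fun v => ⟨c.tail_eq v, rfl, c.edge_eq v⟩⟩
    · -- left inverse
      intro x hx
      obtain ⟨-, hP⟩ := Finset.mem_filter.mp hx
      refine Prod.ext ?_ ?_
      · apply Equiv.ext
        intro v
        apply Subtype.ext
        exact (hP v).2.1
      · funext v
        rfl
    · -- right inverse
      intro c hcc
      rfl
    · -- values agree
      intro x hx
      obtain ⟨-, hP⟩ := Finset.mem_filter.mp hx
      refine Finset.prod_congr rfl fun v _ => ?_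
      rw [indTerm, if_pos ⟨(hP v).1, (hP v).2.1, (hP v).2.2⟩]
      rfl
  rw [step1, step2, step3]
  rw [show ({c : SubPC G U | c.IsSubContributor W} : Set (SubPC G U)) = ↑Sfin by
      rw [hSfin, Set.coe_toFinset]]
  rw [finsum_mem_coe_finset]
  exact Finset.sum_congr rfl fun c hcc => sign_lemma G hsgn U W c ((hmem c).mp hcc)
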